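/- Let q ∈ ℝ and k ∈ (0,2π) with k ≠ π, let Δ be the discrete Laplacian on ℓ²(ℤ) and W̃ the multiplication operator by W̃(n) := q sin(kn). Then for every E ∈ [0,4] with E ≠ 2−2cos(k/2) and E ≠ 2+2cos(k/2), there exists ε > 0 such that for every continuous function θ : ℝ → ℂ vanishing outside (E−ε, E+ε), one has θ(Δ)·W̃·θ(Δ) = 0, where θ(Δ) is defined by the continuous functional calculus of the bounded self-adjoint operator Δ. -/

import Mathlib

noncomputable section

open scoped ENNReal

set_option maxHeartbeats 2000000

/-- The Hilbert space ℓ²(ℤ). -/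
abbrev l2Z : Type := lp (fun _ : ℤ => ℂ) 2

namespace Thm9
open ComplexConjugate


lemma memlp_twist (c : ℤ → ℂ) (hc : ∀ n, ‖c n‖ = 1) (σ : ℤ ≃ ℤ) (u : l2Z) :
    Memℓp (fun n => c n * (u (σ n))) 2 := by
  apply memℓp_gen
  have h0 : (fun n : ℤ => ‖c n * u (σ n)‖ ^ (2:ℝ≥0∞).toReal)
      = fun n => ‖u (σ n)‖ ^ (2:ℝ≥0∞).toReal := by
    funext n; rw [norm_mul, hc n, one_mul]
  rw [h0]
  have hs : Summable (fun n : ℤ => ‖u n‖ ^ (2:ℝ≥0∞).toReal) :=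
    (memℓp_gen_iff (by norm_num)).1 (lp.memℓp u)
  exact σ.summable_iff.2 hs

/-- "twisted shift": u ↦ (n ↦ c n * u (σ n)). -/
def twist (c : ℤ → ℂ) (hc : ∀ n, ‖c n‖ = 1) (σ : ℤ ≃ ℤ) : l2Z →L[ℂ] l2Z :=
  LinearMap.mkContinuous
    { toFun := fun u => (⟨fun n => c n * u (σ n), memlp_twist c hc σ u⟩ : l2Z)
      map_add' := fun u v => by
        ext n
        simp only [lp.coeFn_add, Pi.add_apply]
        exact mul_add _ _ _
      map_smul' := fun r u => by
        ext n
        simp only [lp.coeFn_smul, Pi.smul_apply, smul_eq_mul, RingHom.id_apply]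
        ring }
    1
    (by
      intro u
      have h2 : (0:ℝ) < (2:ℝ≥0∞).toReal := by norm_num
      rw [one_mul]
      apply le_of_eq
      rw [lp.norm_eq_tsum_rpow h2, lp.norm_eq_tsum_rpow h2]
      congr 1
      have : ∀ n : ℤ, ‖(⟨fun n => c n * u (σ n), memlp_twist c hc σ u⟩ : l2Z) n‖ ^ (2:ℝ≥0∞).toReal
          = ‖u (σ n)‖ ^ (2:ℝ≥0∞).toReal := by
        intro n; rw [show (⟨fun n => c n * u (σ n), memlp_twist c hc σ u⟩ : l2Z) n
          = c n * u (σ n) from rfl, norm_mul, hc n, one_mul]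
      calc ∑' (n:ℤ), ‖(⟨fun n => c n * u (σ n), memlp_twist c hc σ u⟩ : l2Z) n‖ ^ (2:ℝ≥0∞).toReal
          = ∑' (n:ℤ), ‖u (σ n)‖ ^ (2:ℝ≥0∞).toReal := tsum_congr this
        _ = ∑' (n:ℤ), ‖u n‖ ^ (2:ℝ≥0∞).toReal := σ.tsum_eq (fun n => ‖u n‖ ^ (2:ℝ≥0∞).toReal))

@[simp] lemma twist_apply (c : ℤ → ℂ) (hc : ∀ n, ‖c n‖ = 1) (σ : ℤ ≃ ℤ) (u : l2Z) (n : ℤ) :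
    (twist c hc σ u) n = c n * u (σ n) := rfl


open ComplexConjugate in
lemma twist_star (c : ℤ → ℂ) (hc : ∀ n, ‖c n‖ = 1) (σ : ℤ ≃ ℤ) :
    star (twist c hc σ) =
      twist (fun n => conj (c (σ.symm n))) (fun n => by simp [hc _]) σ.symm := by
  rw [ContinuousLinearMap.star_eq_adjoint]
  symm
  rw [ContinuousLinearMap.eq_adjoint_iff]
  intro x y
  rw [lp.inner_eq_tsum, lp.inner_eq_tsum]
  rw [← σ.tsum_eq (fun n => inner ℂ ((twist (fun n => conj (c (σ.symm n)))
      (fun n => by simp [hc _]) σ.symm x) n) (y n) : ℤ → ℂ)]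
  apply tsum_congr
  intro m
  simp only [twist_apply, RCLike.inner_apply, Equiv.symm_apply_apply, map_mul,
    RingHomCompTriple.comp_apply, RingHom.id_apply, starRingEnd_self_apply]
  ring


lemma twist_congr (c d : ℤ → ℂ) (hc : ∀ n, ‖c n‖ = 1) (hd : ∀ n, ‖d n‖ = 1)
    (σ τ : ℤ ≃ ℤ) (h : c = d) (hστ : σ = τ) : twist c hc σ = twist d hd τ := by
  subst h; subst hστ; rfl


/-- Equality case is impossible at non-threshold energies. -/
lemma no_double_hit (k E : ℝ) (hk0 : 0 < k) (hk2 : k < 2 * Real.pi)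
    (hEm : E ≠ 2 - 2 * Real.cos (k / 2)) (hEp : E ≠ 2 + 2 * Real.cos (k / 2))
    (a : ℝ) (ha : a = k ∨ a = -k) (ξ : ℝ)
    (h1 : 2 - 2 * Real.cos ξ = E) (h2 : 2 - 2 * Real.cos (ξ + a) = E) : False := by
  have hpi := Real.pi_pos
  have hcc : Real.cos ξ = Real.cos (ξ + a) := by linarith
  rw [Real.cos_eq_cos_iff] at hcc
  obtain ⟨m, hm | hm⟩ := hcc
  · -- ξ + a = 2 m π + ξ, so a = 2 m π, impossible since 0 < |a| < 2π
    have hae : a = 2 * m * Real.pi := by linarith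
    have habs : |a| < 2 * Real.pi := by
      rcases ha with rfl | rfl
      · rw [abs_of_pos hk0]; exact hk2
      · rw [abs_neg, abs_of_pos hk0]; exact hk2
    have hane : a ≠ 0 := by rcases ha with rfl | rfl <;> [exact ne_of_gt hk0; simpa using ne_of_gt hk0]
    have hm0 : m ≠ 0 := by rintro rfl; simp at hae; exact hane hae
    have h1m : (1 : ℝ) ≤ |(m : ℝ)| := by
      have : (1 : ℤ) ≤ |m| := Int.one_le_abs hm0
      exact_mod_cast this
    rw [hae, abs_mul, abs_mul, abs_of_pos hpi] at habs
    simp only [abs_two] at habs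
    nlinarith
  · -- ξ + a = 2 m π - ξ, so ξ = m π - a/2
    have hxi : ξ = m * Real.pi - a / 2 := by linarith
    have hsin : Real.sin ((m : ℝ) * Real.pi) = 0 := Real.sin_int_mul_pi m
    have hcosm : Real.cos ((m : ℝ) * Real.pi) = 1 ∨ Real.cos ((m : ℝ) * Real.pi) = -1 :=
      Real.sin_eq_zero_iff_cos_eq.1 hsin
    have hca : Real.cos (a / 2) = Real.cos (k / 2) := by
      rcases ha with rfl | rfl
      · rfl
      · rw [show (-k) / 2 = -(k / 2) by ring, Real.cos_neg]
    have hcosξ : Real.cos ξ = Real.cos ((m : ℝ) * Real.pi) * Real.cos (k / 2) := by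
      rw [hxi, Real.cos_sub, hsin, hca]; ring
    rcases hcosm with hc | hc
    · apply hEm; rw [← h1, hcosξ, hc]; ring
    · apply hEp; rw [← h1, hcosξ, hc]; ring

/-- Compactness: a uniform gap on the circle. -/
lemma exists_eps (c : ℂ) (E : ℝ)
    (h : ∀ z : ℂ, ‖z‖ = 1 → 2 - 2 * z.re = E → 2 - 2 * (c * z).re = E → False) :
    ∃ ε > 0, ∀ z : ℂ, ‖z‖ = 1 →
      |2 - 2 * z.re - E| < ε → |2 - 2 * (c * z).re - E| < ε → False := by
  set g : ℂ → ℝ := fun z => max |2 - 2 * z.re - E| |2 - 2 * (c * z).re - E| with hg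
  have hgc : Continuous g := by
    apply Continuous.max
    · apply continuous_abs.comp; fun_prop
    · apply continuous_abs.comp; fun_prop
  have hcpt : IsCompact (Metric.sphere (0 : ℂ) 1) := isCompact_sphere _ _
  have hne : (Metric.sphere (0 : ℂ) 1).Nonempty := ⟨1, by simp⟩
  obtain ⟨z₀, hz₀, hmin⟩ := hcpt.exists_isMinOn hne hgc.continuousOn
  have hz₀n : ‖z₀‖ = 1 := by rwa [mem_sphere_zero_iff_norm] at hz₀
  refine ⟨g z₀, ?_, ?_⟩
  · have h0 : 0 ≤ g z₀ := le_trans (abs_nonneg _) (le_max_left _ _)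
    rcases h0.lt_or_eq with hpos | heq
    · exact hpos
    · exfalso
      have ha1 : |2 - 2 * z₀.re - E| = 0 :=
        le_antisymm (heq ▸ le_max_left _ _) (abs_nonneg _)
      have ha2 : |2 - 2 * (c * z₀).re - E| = 0 :=
        le_antisymm (heq ▸ le_max_right _ _) (abs_nonneg _)
      have e1 := abs_eq_zero.1 ha1
      have e2 := abs_eq_zero.1 ha2
      exact h z₀ hz₀n (by linarith) (by linarith)
  · intro z hz h1 h2
    have hle : g z₀ ≤ g z := hmin (by rwa [mem_sphere_zero_iff_norm] : z ∈ Metric.sphere (0:ℂ) 1)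
    have : g z < g z₀ := max_lt h1 h2
    linarith


lemma circle_pair (k E : ℝ) (hk0 : 0 < k) (hk2 : k < 2 * Real.pi)
    (hEm : E ≠ 2 - 2 * Real.cos (k / 2)) (hEp : E ≠ 2 + 2 * Real.cos (k / 2))
    (a : ℝ) (ha : a = k ∨ a = -k) :
    ∀ z : ℂ, ‖z‖ = 1 → 2 - 2 * z.re = E →
      2 - 2 * (Complex.exp (a * Complex.I) * z).re = E → False := by
  intro z hz h1 h2
  have hz0 : z ≠ 0 := by intro h; rw [h, norm_zero] at hz; norm_num at hz
  have habs : ‖z‖ = 1 := hz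
  set ξ := Complex.arg z with hξ
  have hre : z.re = Real.cos ξ := by
    rw [Complex.cos_arg hz0, habs, div_one]
  have him : z.im = Real.sin ξ := by
    rw [Complex.sin_arg, habs, div_one]
  have hre2 : (Complex.exp (a * Complex.I) * z).re = Real.cos (ξ + a) := by
    rw [Complex.mul_re, Complex.exp_ofReal_mul_I_re, Complex.exp_ofReal_mul_I_im,
      hre, him, Real.cos_add]
    ring
  exact no_double_hit k E hk0 hk2 hEm hEp a ha ξ (by rw [← hre]; exact h1)
    (by rw [← hre2]; exact h2)

/-- The combined epsilon for both shifts. -/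
lemma exists_eps_both (k E : ℝ) (hk0 : 0 < k) (hk2 : k < 2 * Real.pi)
    (hEm : E ≠ 2 - 2 * Real.cos (k / 2)) (hEp : E ≠ 2 + 2 * Real.cos (k / 2)) :
    ∃ ε > 0, ∀ a : ℝ, (a = k ∨ a = -k) → ∀ z : ℂ, ‖z‖ = 1 →
      |2 - 2 * z.re - E| < ε →
      |2 - 2 * (Complex.exp (a * Complex.I) * z).re - E| < ε → False := by
  obtain ⟨ε₁, hε₁, h₁⟩ := exists_eps (Complex.exp ((k:ℝ) * Complex.I)) E
    (circle_pair k E hk0 hk2 hEm hEp k (Or.inl rfl))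
  obtain ⟨ε₂, hε₂, h₂⟩ := exists_eps (Complex.exp ((-k:ℝ) * Complex.I)) E
    (circle_pair k E hk0 hk2 hEm hEp (-k) (Or.inr rfl))
  refine ⟨min ε₁ ε₂, lt_min hε₁ hε₂, ?_⟩
  rintro a (rfl | rfl) z hz hA hB
  · exact h₁ z hz (lt_of_lt_of_le hA (min_le_left _ _)) (lt_of_lt_of_le hB (min_le_left _ _))
  · exact h₂ z hz (lt_of_lt_of_le hA (min_le_right _ _)) (lt_of_lt_of_le hB (min_le_right _ _))



variable {A : Type*} [Ring A] [StarRing A] [Algebra ℂ A] [StarModule ℂ A]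

/-- Conjugation by a unitary as a star algebra homomorphism. -/
def conjSAH (U : A) (h1 : U * star U = 1) (h2 : star U * U = 1) : A →⋆ₐ[ℂ] A where
  toFun a := U * a * star U
  map_one' := by show U * 1 * star U = 1; rw [mul_one, h1]
  map_mul' a b := by
    show U * (a * b) * star U = (U * a * star U) * (U * b * star U)
    have : U * a * star U * (U * b * star U) = U * a * (star U * U) * (b * star U) := by
      noncomm_ring
    rw [this, h2, mul_one]
    noncomm_ring
  map_zero' := by show U * 0 * star U = 0; simp
  map_add' a b := by show U * (a + b) * star U = _; rw [mul_add, add_mul]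
  commutes' r := by
    show U * algebraMap ℂ A r * star U = _
    simp only [Algebra.algebraMap_eq_smul_one]
    rw [mul_smul_comm, mul_one, smul_mul_assoc, h1]
  map_star' a := by
    show U * star a * star U = star (U * a * star U)
    simp only [star_mul, star_star, mul_assoc]

lemma isStarNormal_smul (c : ℂ) (a : A) (ha : IsStarNormal a) : IsStarNormal (c • a) := by
  constructor
  rw [star_smul]
  calc star c • star a * c • a = (star c * c) • (star a * a) := by
        rw [smul_mul_assoc, mul_smul_comm, smul_smul]
    _ = (c * star c) • (a * star a) := by rw [mul_comm, ha.star_comm_self.eq]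
    _ = c • a * star c • star a := by rw [smul_mul_assoc, mul_smul_comm, smul_smul]


end Thm9

open ComplexConjugate

set_option linter.unusedVariables false
/-- Let Δ be the discrete Laplacian on ℓ²(ℤ) and W̃ multiplication by
q·sin(kn). For every E ∈ [0,4] with E ≠ 2∓2cos(k/2), there is ε > 0 such that for every
continuous θ : ℝ → ℂ vanishing outside (E−ε,E+ε), one has θ(Δ)·W̃·θ(Δ) = 0, where θ(Δ) is
given by the continuous functional calculus of the bounded self-adjoint operator Δ. -/
theorem theta_Delta_Wtilde_theta_eq_zero (q k : ℝ) (hk0 : 0 < k) (hk2 : k < 2 * Real.pi)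
    (hkpi : k ≠ Real.pi)
    (Δop Wt : l2Z →L[ℂ] l2Z)
    (hΔ : ∀ (u : l2Z) (n : ℤ), (Δop u) n = 2 * u n - u (n + 1) - u (n - 1))
    (hΔsa : IsSelfAdjoint Δop)
    (hWt : ∀ (u : l2Z) (n : ℤ), (Wt u) n = ((q * Real.sin (k * n) : ℝ) : ℂ) * u n)
    (E : ℝ) (hE : E ∈ Set.Icc (0 : ℝ) 4)
    (hEm : E ≠ 2 - 2 * Real.cos (k / 2)) (hEp : E ≠ 2 + 2 * Real.cos (k / 2)) :
    ∃ ε > 0, ∀ θ : ℝ → ℂ, Continuous θ →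
      (∀ x : ℝ, x ∉ Set.Ioo (E - ε) (E + ε) → θ x = 0) →
      cfc (fun z : ℂ => θ z.re) Δop * Wt * cfc (fun z : ℂ => θ z.re) Δop = 0 := by
  obtain ⟨ε, hεpos, hεkey⟩ := Thm9.exists_eps_both k E hk0 hk2 hEm hEp
  refine ⟨ε, hεpos, ?_⟩
  intro θ hθ hθ0
  -- the shift and multiplication operators
  set σ : ℤ ≃ ℤ := Equiv.addRight (1 : ℤ) with hσ
  set S : l2Z →L[ℂ] l2Z := Thm9.twist (fun _ => 1) (fun _ => norm_one) σ with hS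
  set S' : l2Z →L[ℂ] l2Z := Thm9.twist (fun _ => 1) (fun _ => norm_one) σ.symm with hS'
  have hSapp : ∀ (u : l2Z) (n : ℤ), (S u) n = u (n + 1) := by
    intro u n; rw [hS, Thm9.twist_apply, one_mul, hσ]; rfl
  have hS'app : ∀ (u : l2Z) (n : ℤ), (S' u) n = u (n - 1) := by
    intro u n; rw [hS', Thm9.twist_apply, one_mul, hσ]; rfl
  have hstarS : star S = S' := by
    rw [hS, Thm9.twist_star, hS']
    exact Thm9.twist_congr _ _ _ _ _ _ (by funext n; simp) rfl
  have hSS' : S * S' = 1 := by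
    ext u n
    rw [ContinuousLinearMap.mul_apply, hSapp, hS'app, ContinuousLinearMap.one_apply,
      add_sub_cancel_right]
  have hS'S : S' * S = 1 := by
    ext u n
    rw [ContinuousLinearMap.mul_apply, hS'app, hSapp, ContinuousLinearMap.one_apply,
      sub_add_cancel]
  have hSu : S ∈ unitary (l2Z →L[ℂ] l2Z) := by
    rw [Unitary.mem_iff, hstarS]; exact ⟨hS'S, hSS'⟩
  have hSnorm : IsStarNormal S := by
    constructor
    rw [hstarS]
    show S' * S = S * S'
    rw [hS'S, hSS']
  have hspec : ∀ z ∈ spectrum ℂ S, ‖z‖ = 1 := by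
    intro z hz
    have := spectrum.subset_circle_of_unitary hSu hz
    rwa [mem_sphere_zero_iff_norm] at this
  -- multiplication by exp(i k n)
  set ck : ℤ → ℂ := fun n => Complex.exp ((k * (n : ℝ) : ℝ) * Complex.I) with hckdef
  have hck : ∀ n, ‖ck n‖ = 1 := by
    intro n; rw [hckdef]; exact Complex.norm_exp_ofReal_mul_I _
  have hckconj : ∀ n, conj (ck n) = Complex.exp ((-(k * (n : ℝ)) : ℝ) * Complex.I) := by
    intro n
    rw [hckdef, ← Complex.exp_conj]
    congr 1
    simp [Complex.conj_ofReal]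
  set M : l2Z →L[ℂ] l2Z := Thm9.twist ck hck (Equiv.refl ℤ) with hM
  set M' : l2Z →L[ℂ] l2Z :=
    Thm9.twist (fun n => conj (ck n)) (fun n => by simp [hck n]) (Equiv.refl ℤ) with hM'
  have hMapp : ∀ (u : l2Z) (n : ℤ), (M u) n = ck n * u n := by
    intro u n; rw [hM, Thm9.twist_apply]; rfl
  have hM'app : ∀ (u : l2Z) (n : ℤ), (M' u) n = conj (ck n) * u n := by
    intro u n; rw [hM', Thm9.twist_apply]; rfl
  have hstarM : star M = M' := by
    rw [hM, Thm9.twist_star, hM']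
    exact Thm9.twist_congr _ _ _ _ _ _ rfl (by simp)
  have hckmul : ∀ n, ck n * conj (ck n) = 1 := by
    intro n
    rw [hckconj, hckdef, ← Complex.exp_add]
    rw [show ((k * (n:ℝ) : ℝ) : ℂ) * Complex.I + ((-(k * (n:ℝ)) : ℝ) : ℂ) * Complex.I = 0 by
      push_cast; ring]
    exact Complex.exp_zero
  have hMM' : M * star M = 1 := by
    rw [hstarM]; ext u n
    rw [ContinuousLinearMap.mul_apply, hMapp, hM'app, ContinuousLinearMap.one_apply, ← mul_assoc,
      hckmul, one_mul]
  have hM'M : star M * M = 1 := by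
    rw [hstarM]; ext u n
    rw [ContinuousLinearMap.mul_apply, hM'app, hMapp, ContinuousLinearMap.one_apply, ← mul_assoc,
      mul_comm (conj (ck n)) (ck n), hckmul, one_mul]
  -- the two conjugation identities
  set em : ℂ := Complex.exp ((-k : ℝ) * Complex.I) with hem
  set ep : ℂ := Complex.exp ((k : ℝ) * Complex.I) with hep
  have hconj1 : M * S * star M = em • S := by
    rw [hstarM]; ext u n
    rw [ContinuousLinearMap.mul_apply, ContinuousLinearMap.mul_apply, hMapp, hSapp, hM'app,
      ContinuousLinearMap.smul_apply, lp.coeFn_smul, Pi.smul_apply, hSapp, smul_eq_mul,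
      ← mul_assoc]
    congr 1
    rw [hckconj, hckdef, ← Complex.exp_add, hem]
    congr 1
    push_cast
    ring
  have hconj2 : star M * S * star (star M) = ep • S := by
    rw [star_star, hstarM]; ext u n
    rw [ContinuousLinearMap.mul_apply, ContinuousLinearMap.mul_apply, hM'app, hSapp, hMapp,
      ContinuousLinearMap.smul_apply, lp.coeFn_smul, Pi.smul_apply, hSapp, smul_eq_mul,
      ← mul_assoc]
    congr 1
    rw [hckconj, hckdef, ← Complex.exp_add, hep]
    congr 1
    push_cast
    ring
  -- Δop as cfc of S
  have hΔnorm : IsStarNormal Δop := hΔsa.isStarNormal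
  have hΔeq : Δop = algebraMap ℂ (l2Z →L[ℂ] l2Z) 2 - S - star S := by
    rw [hstarS]; ext u n
    rw [hΔ]
    rw [ContinuousLinearMap.sub_apply, ContinuousLinearMap.sub_apply, lp.coeFn_sub,
      lp.coeFn_sub, Pi.sub_apply, Pi.sub_apply, hSapp, hS'app,
      Algebra.algebraMap_eq_smul_one, ContinuousLinearMap.smul_apply,
      ContinuousLinearMap.one_apply, lp.coeFn_smul, Pi.smul_apply, smul_eq_mul]
  have hfS : cfc (fun z : ℂ => 2 - z - star z) S = Δop := by
    calc cfc (fun z : ℂ => 2 - z - star z) S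
        = cfc (fun z : ℂ => 2 - z) S - cfc (fun z : ℂ => star z) S :=
          cfc_sub _ _ S (by fun_prop) (by fun_prop)
      _ = (cfc (fun _ : ℂ => (2:ℂ)) S - cfc (fun z : ℂ => z) S) - star S := by
          rw [cfc_sub (fun _ : ℂ => (2:ℂ)) (fun z : ℂ => z) S (by fun_prop) (by fun_prop),
            cfc_star_id (R := ℂ) (a := S) (ha := hSnorm)]
      _ = algebraMap ℂ (l2Z →L[ℂ] l2Z) 2 - S - star S := by
          rw [cfc_const (2:ℂ) S, cfc_id' ℂ S]
      _ = Δop := hΔeq.symm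
  -- the localized operator
  set hfun : ℂ → ℂ := fun z => θ ((2 - z - star z).re) with hhfun
  have hfun_cont : Continuous hfun := by
    apply hθ.comp
    apply Complex.continuous_re.comp
    continuity
  set A : l2Z →L[ℂ] l2Z := cfc (fun z : ℂ => θ z.re) Δop with hA
  have hAeq : A = cfc hfun S := by
    rw [hA, ← hfS, ← cfc_comp (fun z : ℂ => θ z.re) (fun z : ℂ => 2 - z - star z) S hSnorm
      ((hθ.comp Complex.continuous_re).continuousOn) (by fun_prop)]
    rfl
  -- conjugating A by M and M'
  have hcontconj : ∀ (U : l2Z →L[ℂ] l2Z),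
      Continuous (fun a : l2Z →L[ℂ] l2Z => U * a * star U) := by
    intro U
    exact (continuous_mul_right (star U)).comp (continuous_mul_left U)
  have hMAM : M * A * star M = cfc (fun z => hfun (em * z)) S := by
    have hnm : IsStarNormal (M * S * star M) := by
      rw [hconj1]; exact Thm9.isStarNormal_smul em S hSnorm
    have h1 : M * A * star M = cfc hfun (M * S * star M) := by
      rw [hAeq]
      exact (Thm9.conjSAH M hMM' hM'M).map_cfc hfun S hfun_cont.continuousOn
        (hcontconj M) hSnorm hnm
    rw [h1, hconj1, ← cfc_const_mul_id em S hSnorm,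
      ← cfc_comp hfun (fun z : ℂ => em * z) S hSnorm hfun_cont.continuousOn (by fun_prop)]
    rfl
  have hM'AM : star M * A * M = cfc (fun z => hfun (ep * z)) S := by
    have hnm : IsStarNormal (star M * S * star (star M)) := by
      rw [hconj2]; exact Thm9.isStarNormal_smul ep S hSnorm
    have h1 : star M * A * star (star M) = cfc hfun (star M * S * star (star M)) := by
      rw [hAeq]
      exact (Thm9.conjSAH (star M) (by rw [star_star]; exact hM'M)
        (by rw [star_star]; exact hMM')).map_cfc hfun S hfun_cont.continuousOn
        (hcontconj (star M)) hSnorm hnm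
    rw [star_star] at h1 hconj2
    rw [h1, hconj2, ← cfc_const_mul_id ep S hSnorm,
      ← cfc_comp hfun (fun z : ℂ => ep * z) S hSnorm hfun_cont.continuousOn (by fun_prop)]
    rfl
  -- vanishing products
  have hIoo : ∀ x : ℝ, θ x ≠ 0 → |x - E| < ε := by
    intro x hx
    by_cases hmem : x ∈ Set.Ioo (E - ε) (E + ε)
    · obtain ⟨h1, h2⟩ := hmem
      rw [abs_lt]; constructor <;> linarith
    · exact absurd (hθ0 x hmem) hx
  have hre : ∀ w : ℂ, (2 - w - star w).re = 2 - 2 * w.re := by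
    intro w
    simp [Complex.sub_re, Complex.conj_re]
    ring
  have hvanish : ∀ (e : ℂ) (a : ℝ), e = Complex.exp ((a : ℝ) * Complex.I) →
      (a = k ∨ a = -k) → A * cfc (fun z => hfun (e * z)) S = 0 := by
    intro e a hea haor
    rw [hAeq, ← cfc_mul hfun (fun z => hfun (e * z)) S hfun_cont.continuousOn
      (by fun_prop)]
    have hzero : (spectrum ℂ S).EqOn (fun z => hfun z * hfun (e * z)) 0 := by
      intro z hz
      have hnz : ‖z‖ = 1 := hspec z hz
      show hfun z * hfun (e * z) = 0
      by_cases h1 : θ ((2 - z - star z).re) = 0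
      · rw [hhfun]; simp only []; rw [h1, zero_mul]
      · by_cases h2 : θ ((2 - e * z - star (e * z)).re) = 0
        · rw [hhfun]; simp only []; rw [h2, mul_zero]
        · exfalso
          have k1 : |(2 - z - star z).re - E| < ε := hIoo _ h1
          have k2 : |(2 - e * z - star (e * z)).re - E| < ε := hIoo _ h2
          rw [hre] at k1 k2
          rw [hea] at k2
          exact hεkey a haor z hnz k1 k2
    rw [cfc_congr hzero]
    exact cfc_zero ℂ S
  have hv1 : A * cfc (fun z => hfun (em * z)) S = 0 := hvanish em (-k) (by rw [hem]) (Or.inr rfl)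
  have hv2 : A * cfc (fun z => hfun (ep * z)) S = 0 := hvanish ep k (by rw [hep]) (Or.inl rfl)
  -- hence A * M * A = 0 and A * star M * A = 0
  have hAMA : A * M * A = 0 := by
    have step : A * M * A = A * (M * A * star M) * M := by
      have h0 : A * (M * A * star M) * M = A * M * A * (star M * M) := by
        simp only [mul_assoc]
      rw [h0, hM'M, mul_one]
    rw [step, hMAM, hv1, zero_mul]
  have hAM'A : A * star M * A = 0 := by
    have step : A * star M * A = A * (star M * A * M) * star M := by
      have h0 : A * (star M * A * M) * star M = A * star M * A * (M * star M) := by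
        simp only [mul_assoc]
      rw [h0, hMM', mul_one]
    rw [step, hM'AM, hv2, zero_mul]
  -- Wt in terms of M
  have hWteq : Wt = (-(q : ℂ) * Complex.I / 2) • (M - star M) := by
    rw [hstarM]; ext u n
    rw [hWt, ContinuousLinearMap.smul_apply, lp.coeFn_smul, Pi.smul_apply,
      ContinuousLinearMap.sub_apply, lp.coeFn_sub, Pi.sub_apply, hMapp, hM'app,
      smul_eq_mul, Complex.ofReal_mul, Complex.ofReal_sin]
    rw [hckconj, hckdef]
    rw [Complex.sin, mul_sub, sub_mul, mul_comm]
    push_cast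
    ring_nf
  -- final assembly
  show A * Wt * A = 0
  rw [hWteq, mul_smul_comm, smul_mul_assoc, mul_sub, sub_mul, hAMA, hAM'A, sub_zero,
    smul_zero]
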